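/- The global defensive alliance number of C₅ ∘ P₃ equals 5. -/

import Mathlib

/-- Lexicographic product of simple graphs. -/
def lexProd {α β : Type*} (G : SimpleGraph α) (H : SimpleGraph β) :
    SimpleGraph (α × β) where
  Adj x y := G.Adj x.1 y.1 ∨ (x.1 = y.1 ∧ H.Adj x.2 y.2)
  symm := by
    constructor
    rintro x y (h | ⟨h1, h2⟩)
    · exact Or.inl h.symm
    · exact Or.inr ⟨h1.symm, h2.symm⟩
  loopless := by
    constructor
    rintro x (h | ⟨_, h2⟩)
    · exact G.irrefl h
    · exact H.irrefl h2

/-- Closed neighborhood N[v]. -/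
def closedNbhd {α : Type*} (G : SimpleGraph α) (v : α) : Set α :=
  insert v (G.neighborSet v)

/-- A defensive alliance: every vertex of S is defended. -/
def IsDefensiveAlliance {α : Type*} (G : SimpleGraph α) (S : Set α) : Prop :=
  ∀ v ∈ S, ((closedNbhd G v) \ S).ncard ≤ ((closedNbhd G v) ∩ S).ncard

/-- A global defensive alliance: a defensive alliance which is also dominating. -/
def IsGDA {α : Type*} (G : SimpleGraph α) (S : Set α) : Prop :=
  IsDefensiveAlliance G S ∧ ∀ v, v ∈ S ∨ ∃ u ∈ S, G.Adj v u

/-- The global defensive alliance number. -/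
noncomputable def gdaNumber {α : Type*} (G : SimpleGraph α) : ℕ :=
  sInf {k | ∃ S : Set α, IsGDA G S ∧ S.ncard = k}

/-- Number of vertices of S in the j-th copy of G² (copies indexed 1,…,n). -/
noncomputable def copyCount {n m : ℕ} (S : Set (Fin n × Fin m)) (j : ℕ) : ℕ :=
  (S ∩ {p | (p.1 : ℕ) + 1 = j}).ncard

/-! ### Auxiliary material -/

instance : DecidableRel (SimpleGraph.pathGraph 3).Adj :=
  fun _ _ => decidable_of_iff _ SimpleGraph.pathGraph_adj.symm

instance : DecidableRel (lexProd (SimpleGraph.cycleGraph 5) (SimpleGraph.pathGraph 3)).Adj :=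
  fun x y => inferInstanceAs (Decidable ((SimpleGraph.cycleGraph 5).Adj x.1 y.1 ∨
    (x.1 = y.1 ∧ (SimpleGraph.pathGraph 3).Adj x.2 y.2)))

abbrev V9 := Fin 5 × Fin 3

abbrev G9 := lexProd (SimpleGraph.cycleGraph 5) (SimpleGraph.pathGraph 3)

/-- Explicit arithmetic description of the adjacency of `G9`. -/
def adjB (x y : V9) : Prop :=
  ((x.1 : ℕ) + 1) % 5 = y.1 ∨ ((y.1 : ℕ) + 1) % 5 = x.1 ∨
    (x.1 = y.1 ∧ ((x.2 : ℕ) + 1 = y.2 ∨ (y.2 : ℕ) + 1 = x.2))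

instance : DecidableRel adjB := fun _ _ => by unfold adjB; infer_instance

lemma adj_iff : ∀ x y : V9, G9.Adj x y ↔ adjB x y := by decide

/-- Closed neighborhood as a finset. -/
def cnF (v : V9) : Finset V9 := Finset.univ.filter (fun u => u = v ∨ adjB v u)

/-- Finset version of `IsGDA` for `G9`. -/
def P9 (F : Finset V9) : Prop :=
  (∀ v ∈ F, ((cnF v \ F).card ≤ ((cnF v) ∩ F).card)) ∧
    ∀ v : V9, v ∈ F ∨ ∃ u ∈ F, adjB v u

instance : DecidablePred P9 := fun _ => by unfold P9; infer_instance

lemma closedNbhd_coe (v : V9) : closedNbhd G9 v = ↑(cnF v) := by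
  ext u
  simp [closedNbhd, cnF, SimpleGraph.mem_neighborSet, adj_iff, eq_comm]

lemma isGDA_iff (F : Finset V9) : IsGDA G9 ↑F ↔ P9 F := by
  have h1 : ∀ v : V9, (closedNbhd G9 v \ (↑F : Set V9)).ncard = (cnF v \ F).card := by
    intro v
    rw [closedNbhd_coe, ← Finset.coe_sdiff, Set.ncard_coe_finset]
  have h2 : ∀ v : V9, (closedNbhd G9 v ∩ (↑F : Set V9)).ncard = (cnF v ∩ F).card := by
    intro v
    rw [closedNbhd_coe, ← Finset.coe_inter, Set.ncard_coe_finset]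
  unfold IsGDA IsDefensiveAlliance P9
  simp only [h1, h2, Finset.mem_coe, Set.mem_setOf_eq, adj_iff]

lemma cn_card : ∀ v : V9, (cnF v).card = if v.2 = 1 then 9 else 8 := by decide

def cyc (i j : Fin 5) : Prop := ((i : ℕ) + 1) % 5 = j ∨ ((j : ℕ) + 1) % 5 = i

instance : DecidableRel cyc := fun _ _ => by unfold cyc; infer_instance

set_option maxRecDepth 4000 in
lemma endAdj : ∀ a b : V9, (a.2 ≠ 1 ∧ b.2 ≠ 1 ∧ a ≠ b) → (adjB a b → cyc a.1 b.1) := by decide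

lemma noCycClique : ∀ p q r s : Fin 5,
    ¬(cyc p q ∧ cyc p r ∧ cyc p s ∧ cyc q r ∧ cyc q s ∧ cyc r s) := by decide

/-- There is no "closed clique" of four end-vertices. -/
lemma noClique4 : ∀ a b c d : V9,
    (a.2 ≠ 1 ∧ b.2 ≠ 1 ∧ c.2 ≠ 1 ∧ d.2 ≠ 1 ∧
     a ≠ b ∧ a ≠ c ∧ a ≠ d ∧ b ≠ c ∧ b ≠ d ∧ c ≠ d) →
    ¬(adjB a b ∧ adjB a c ∧ adjB a d ∧ adjB b c ∧ adjB b d ∧ adjB c d) := by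
  rintro a b c d ⟨ha, hb, hc, hd, hab, hac, had, hbc, hbd, hcd⟩
    ⟨h1, h2, h3, h4, h5, h6⟩
  exact noCycClique a.1 b.1 c.1 d.1
    ⟨endAdj a b ⟨ha, hb, hab⟩ h1, endAdj a c ⟨ha, hc, hac⟩ h2, endAdj a d ⟨ha, hd, had⟩ h3,
     endAdj b c ⟨hb, hc, hbc⟩ h4, endAdj b d ⟨hb, hd, hbd⟩ h5, endAdj c d ⟨hc, hd, hcd⟩ h6⟩

lemma lowerF (F : Finset V9) (h : P9 F) : 5 ≤ F.card := by
  by_contra hlt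
  push_neg at hlt
  have hle : F.card ≤ 4 := Nat.lt_succ_iff.mp hlt
  obtain ⟨hdef, hdom⟩ := h
  have hne : F.Nonempty := by
    rcases hdom ((0 : Fin 5), (0 : Fin 3)) with hv | ⟨u, hu, _⟩
    exacts [⟨_, hv⟩, ⟨u, hu⟩]
  have key : ∀ v ∈ F, (cnF v ∩ F = F ∧ F.card = 4) ∧ v.2 ≠ 1 := by
    intro v hv
    have h8 := cn_card v
    have hsum : (cnF v \ F).card + (cnF v ∩ F).card = (cnF v).card :=
      Finset.card_sdiff_add_card_inter _ _
    have hd := hdef v hv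
    have hc : (cnF v ∩ F).card ≤ F.card := Finset.card_le_card Finset.inter_subset_right
    by_cases hmid : v.2 = 1
    · rw [if_pos hmid] at h8; omega
    · rw [if_neg hmid] at h8
      have heq : (cnF v ∩ F).card = F.card := by omega
      exact ⟨⟨Finset.eq_of_subset_of_card_le Finset.inter_subset_right heq.ge, by omega⟩, hmid⟩
  obtain ⟨v0, hv0⟩ := hne
  have hcard4 : F.card = 4 := ((key v0 hv0).1).2
  -- the clique property
  have hclq : ∀ v ∈ F, ∀ u ∈ F, u = v ∨ adjB v u := by
    intro v hv u hu
    have hFsub : F ⊆ cnF v := by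
      intro x hx
      have hx' : x ∈ cnF v ∩ F := by rw [((key v hv).1).1]; exact hx
      exact (Finset.mem_inter.mp hx').1
    simpa [cnF] using hFsub hu
  -- extract four distinct elements of F
  obtain ⟨a, t, hat, hins, ht3⟩ := Finset.card_eq_succ.mp hcard4
  obtain ⟨x, y, z, hxy, hxz, hyz, hteq⟩ := Finset.card_eq_three.mp ht3
  subst hteq
  have haF : a ∈ F := by rw [← hins]; exact Finset.mem_insert_self _ _
  have hxF : x ∈ F := by rw [← hins]; simp
  have hyF : y ∈ F := by rw [← hins]; simp
  have hzF : z ∈ F := by rw [← hins]; simp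
  have hax : a ≠ x := fun h => hat (by simp [h])
  have hay : a ≠ y := fun h => hat (by simp [h])
  have haz : a ≠ z := fun h => hat (by simp [h])
  have hadj : ∀ v ∈ F, ∀ u ∈ F, v ≠ u → adjB v u := by
    intro v hv u hu hne'
    rcases hclq v hv u hu with h | h
    · exact absurd h.symm hne'
    · exact h
  exact noClique4 a x y z
    ⟨(key a haF).2, (key x hxF).2, (key y hyF).2, (key z hzF).2,
      hax, hay, haz, hxy, hxz, hyz⟩
    ⟨hadj a haF x hxF hax, hadj a haF y hyF hay, hadj a haF z hzF haz,
      hadj x hxF y hyF hxy, hadj x hxF z hzF hxz, hadj y hyF z hzF hyz⟩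

lemma lowerBound (S : Set V9) (h : IsGDA G9 S) : 5 ≤ S.ncard := by
  have hfin : S.Finite := S.toFinite
  have hcoe : S = ↑hfin.toFinset := (Set.Finite.coe_toFinset hfin).symm
  rw [Set.ncard_eq_toFinset_card S hfin]
  exact lowerF _ ((isGDA_iff _).mp (hcoe ▸ h))

def F0 : Finset V9 :=
  {((0 : Fin 5), (0 : Fin 3)), ((0 : Fin 5), (1 : Fin 3)), ((0 : Fin 5), (2 : Fin 3)),
   ((1 : Fin 5), (0 : Fin 3)), ((4 : Fin 5), (0 : Fin 3))}

lemma upperWitness : IsGDA G9 ↑F0 ∧ (↑F0 : Set V9).ncard = 5 := by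
  constructor
  · exact (isGDA_iff F0).mpr (by decide)
  · rw [Set.ncard_coe_finset]; decide

theorem stmt_9 :
    gdaNumber (lexProd (SimpleGraph.cycleGraph 5) (SimpleGraph.pathGraph 3)) = 5 := by
  have hmem : 5 ∈ {k | ∃ S : Set V9, IsGDA G9 S ∧ S.ncard = k} :=
    ⟨↑F0, upperWitness.1, upperWitness.2⟩
  refine le_antisymm (Nat.sInf_le hmem) (le_csInf ⟨5, hmem⟩ ?_)
  rintro k ⟨S, hS, rfl⟩
  exact lowerBound S hS
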